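/- The GROW value for testing E_P[X] = μ₀ against E_Q[X] = μ₁ on [a,b] satisfies GROW = sup_{α ∈ I} inf over Q with mean μ₁ of E_Q[log(1+α(X-μ₀))] = sup_{α ∈ I} [((b-μ₁)/(b-a)) log(1+α(a-μ₀)) + ((μ₁-a)/(b-a)) log(1+α(b-μ₀))], where I = [1/(μ₀-b), 1/(μ₀-a)]; i.e., the worst-case alternative for every coin-betting e-variable is the two-point measure q δ_a + (1-q) δ_b with q = (b-μ₁)/(b-a). -/

import Mathlib

open MeasureTheory Set

/-- Extended-real logarithm with the convention `log x = -∞` for `x ≤ 0`. -/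
noncomputable def logE (x : ℝ) : EReal :=
  if x ≤ 0 then ⊥ else ((Real.log x : ℝ) : EReal)

/-- Worst-case e-power of the coin-betting e-variable `x ↦ 1 + α (x - μ₀)` over
probability measures on `[a,b]` with mean `μ`: the infimum of `E_Q[log (1 + α (X - μ₀))]`,
where the e-power is `-∞` (i.e. `⊥`) when the log is not `Q`-integrable or the
e-variable vanishes on a set of positive `Q`-measure. -/
noncomputable def worstEPower (a b μ₀ μ α : ℝ) : EReal :=
  sInf {y : EReal | ∃ Q : Measure ℝ, IsProbabilityMeasure Q ∧
    Q (Icc a b)ᶜ = 0 ∧ (∫ t, t ∂Q) = μ ∧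
    (((Q {t | 1 + α * (t - μ₀) ≤ 0} = 0 ∧
        Integrable (fun t => Real.log (1 + α * (t - μ₀))) Q) ∧
       y = ((∫ t, Real.log (1 + α * (t - μ₀)) ∂Q : ℝ) : EReal)) ∨
     (¬(Q {t | 1 + α * (t - μ₀) ≤ 0} = 0 ∧
        Integrable (fun t => Real.log (1 + α * (t - μ₀))) Q) ∧ y = ⊥))}

lemma integrable_dirac' (f : ℝ → ℝ) (c : ℝ) : Integrable f (Measure.dirac c) := by
  refine (integrable_const (f c)).congr ?_
  rw [ae_dirac_eq]
  exact Filter.eventually_pure.2 rfl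

lemma integral_two_point (a b q : ℝ) (hq0 : 0 ≤ q) (hq1 : q ≤ 1) (f : ℝ → ℝ) :
    ∫ t, f t ∂(ENNReal.ofReal q • Measure.dirac a + ENNReal.ofReal (1-q) • Measure.dirac b)
      = q * f a + (1-q) * f b := by
  rw [integral_add_measure ((integrable_dirac' f a).smul_measure ENNReal.ofReal_ne_top)
      ((integrable_dirac' f b).smul_measure ENNReal.ofReal_ne_top),
    integral_smul_measure, integral_smul_measure, integral_dirac, integral_dirac,
    ENNReal.toReal_ofReal hq0, ENNReal.toReal_ofReal (by linarith)]
  simp [smul_eq_mul]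


lemma convex_comb_le_max (c d A B : ℝ) (hc : 0 ≤ c) (hd : 0 ≤ d) (hcd : c + d = 1) :
    c * A + d * B ≤ max A B := by
  calc c * A + d * B ≤ c * max A B + d * max A B :=
        add_le_add (mul_le_mul_of_nonneg_left (le_max_left A B) hc)
          (mul_le_mul_of_nonneg_left (le_max_right A B) hd)
    _ = max A B := by rw [← add_mul, hcd, one_mul]

lemma min_le_convex_comb (c d A B : ℝ) (hc : 0 ≤ c) (hd : 0 ≤ d) (hcd : c + d = 1) :
    min A B ≤ c * A + d * B := by
  calc min A B = c * min A B + d * min A B := by rw [← add_mul, hcd, one_mul]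
    _ ≤ c * A + d * B :=
        add_le_add (mul_le_mul_of_nonneg_left (min_le_left A B) hc)
          (mul_le_mul_of_nonneg_left (min_le_right A B) hd)

theorem stmt9 (a b μ₀ μ₁ : ℝ) (h1 : a < μ₀) (h2 : μ₀ < b)
    (h3 : a < μ₁) (h4 : μ₁ < b) :
    (∀ α ∈ Icc (1 / (μ₀ - b)) (1 / (μ₀ - a)),
      worstEPower a b μ₀ μ₁ α =
        (((b - μ₁) / (b - a) : ℝ) : EReal) * logE (1 + α * (a - μ₀)) +
        (((μ₁ - a) / (b - a) : ℝ) : EReal) * logE (1 + α * (b - μ₀))) ∧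
    (⨆ α ∈ Icc (1 / (μ₀ - b)) (1 / (μ₀ - a)), worstEPower a b μ₀ μ₁ α) =
      ⨆ α ∈ Icc (1 / (μ₀ - b)) (1 / (μ₀ - a)),
        ((((b - μ₁) / (b - a) : ℝ) : EReal) * logE (1 + α * (a - μ₀)) +
         (((μ₁ - a) / (b - a) : ℝ) : EReal) * logE (1 + α * (b - μ₀))) := by
  have hba : (0:ℝ) < b - a := by linarith
  have hab : a < b := by linarith
  set q : ℝ := (b - μ₁) / (b - a) with hq_def
  set p : ℝ := (μ₁ - a) / (b - a) with hp_def
  have hq0 : 0 < q := div_pos (by linarith) hba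
  have hp0 : 0 < p := div_pos (by linarith) hba
  have hqp : q + p = 1 := by rw [hq_def, hp_def]; field_simp; ring
  have hq1 : q ≤ 1 := by linarith
  have hp_eq : p = 1 - q := by linarith
  -- the candidate worst-case two-point measure
  set Qs : Measure ℝ :=
    ENNReal.ofReal q • Measure.dirac a + ENNReal.ofReal (1-q) • Measure.dirac b with hQs_def
  have hQs_prob : IsProbabilityMeasure Qs := by
    constructor
    rw [hQs_def]
    simp only [Measure.coe_add, Pi.add_apply, Measure.smul_apply, smul_eq_mul,
      measure_univ, mul_one]
    rw [← ENNReal.ofReal_add hq0.le (by linarith)]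
    norm_num
  have hQs_supp : Qs (Icc a b)ᶜ = 0 := by
    rw [hQs_def]
    simp only [Measure.coe_add, Pi.add_apply, Measure.smul_apply, smul_eq_mul,
      Measure.dirac_apply]
    rw [Set.indicator_of_notMem (by simp [mem_Icc, hab.le]),
      Set.indicator_of_notMem (by simp [mem_Icc, hab.le])]
    simp
  have hQs_mean : (∫ t, t ∂Qs) = μ₁ := by
    rw [hQs_def, integral_two_point a b q hq0.le hq1 (fun t => t)]
    rw [hq_def]; field_simp; ring
  have key : ∀ α ∈ Icc (1 / (μ₀ - b)) (1 / (μ₀ - a)),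
      worstEPower a b μ₀ μ₁ α =
        ((q : ℝ) : EReal) * logE (1 + α * (a - μ₀)) +
        ((p : ℝ) : EReal) * logE (1 + α * (b - μ₀)) := by
    intro α hα
    obtain ⟨hαl, hαr⟩ := hα
    set A : ℝ := 1 + α * (a - μ₀) with hA_def
    set B : ℝ := 1 + α * (b - μ₀) with hB_def
    have hA0 : 0 ≤ A := by
      have h : α * (μ₀ - a) ≤ 1 := by
        have := (le_div_iff₀ (by linarith : (0:ℝ) < μ₀ - a)).mp hαr
        linarith
      rw [hA_def]; nlinarith
    have hB0 : 0 ≤ B := by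
      have h : α * (μ₀ - b) ≤ 1 := by
        have := (div_le_iff_of_neg (by linarith : (μ₀ - b : ℝ) < 0)).mp hαl
        nlinarith
      rw [hB_def]; nlinarith
    have hcomb : ∀ t, a ≤ t → t ≤ b →
        1 + α * (t - μ₀) = ((b-t)/(b-a)) * A + ((t-a)/(b-a)) * B := by
      intro t _ _
      rw [hA_def, hB_def]; field_simp; ring
    rcases eq_or_lt_of_le hA0 with hA | hA
    · -- A = 0 : both sides are ⊥
      have hmemA : a ∈ {t | 1 + α * (t - μ₀) ≤ 0} := by
        simp only [mem_setOf_eq, ← hA_def, ← hA, le_refl]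
      have hne : Qs {t | 1 + α * (t - μ₀) ≤ 0} ≠ 0 := by
        intro h0
        have hle : (ENNReal.ofReal q • Measure.dirac a) {t | 1 + α * (t - μ₀) ≤ 0} ≤
            Qs {t | 1 + α * (t - μ₀) ≤ 0} := by
          rw [hQs_def]; exact Measure.le_iff'.1 (Measure.le_add_right le_rfl) _
        rw [h0] at hle
        have : (ENNReal.ofReal q • Measure.dirac a) {t | 1 + α * (t - μ₀) ≤ 0} =
            ENNReal.ofReal q := by
          simp [Measure.smul_apply, Measure.dirac_apply, Set.indicator_of_mem hmemA]
        rw [this] at hle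
        exact absurd (le_antisymm hle bot_le) (ENNReal.ofReal_pos.2 hq0).ne'
      have hbot : (⊥ : EReal) ∈ {y : EReal | ∃ Q : Measure ℝ, IsProbabilityMeasure Q ∧
          Q (Icc a b)ᶜ = 0 ∧ (∫ t, t ∂Q) = μ₁ ∧
          (((Q {t | 1 + α * (t - μ₀) ≤ 0} = 0 ∧
              Integrable (fun t => Real.log (1 + α * (t - μ₀))) Q) ∧
             y = ((∫ t, Real.log (1 + α * (t - μ₀)) ∂Q : ℝ) : EReal)) ∨
           (¬(Q {t | 1 + α * (t - μ₀) ≤ 0} = 0 ∧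
              Integrable (fun t => Real.log (1 + α * (t - μ₀))) Q) ∧ y = ⊥))} :=
        ⟨Qs, hQs_prob, hQs_supp, hQs_mean, Or.inr ⟨fun h => hne h.1, rfl⟩⟩
      have hL : worstEPower a b μ₀ μ₁ α = ⊥ :=
        le_antisymm (sInf_le hbot) bot_le
      rw [hL]
      have : logE A = ⊥ := by rw [logE, if_pos hA.ge]
      rw [this, EReal.coe_mul_bot_of_pos hq0, EReal.bot_add]
    rcases eq_or_lt_of_le hB0 with hB | hB
    · -- B = 0 : both sides are ⊥
      have hmemB : b ∈ {t | 1 + α * (t - μ₀) ≤ 0} := by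
        simp only [mem_setOf_eq, ← hB_def, ← hB, le_refl]
      have hne : Qs {t | 1 + α * (t - μ₀) ≤ 0} ≠ 0 := by
        intro h0
        have hle : (ENNReal.ofReal (1-q) • Measure.dirac b) {t | 1 + α * (t - μ₀) ≤ 0} ≤
            Qs {t | 1 + α * (t - μ₀) ≤ 0} := by
          rw [hQs_def]; exact Measure.le_iff'.1 (Measure.le_add_left le_rfl) _
        rw [h0] at hle
        have : (ENNReal.ofReal (1-q) • Measure.dirac b) {t | 1 + α * (t - μ₀) ≤ 0} =
            ENNReal.ofReal (1-q) := by
          simp [Measure.smul_apply, Measure.dirac_apply, Set.indicator_of_mem hmemB]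
        rw [this] at hle
        exact absurd (le_antisymm hle bot_le)
          (ENNReal.ofReal_pos.2 (by linarith : (0:ℝ) < 1 - q)).ne'
      have hbot : (⊥ : EReal) ∈ {y : EReal | ∃ Q : Measure ℝ, IsProbabilityMeasure Q ∧
          Q (Icc a b)ᶜ = 0 ∧ (∫ t, t ∂Q) = μ₁ ∧
          (((Q {t | 1 + α * (t - μ₀) ≤ 0} = 0 ∧
              Integrable (fun t => Real.log (1 + α * (t - μ₀))) Q) ∧
             y = ((∫ t, Real.log (1 + α * (t - μ₀)) ∂Q : ℝ) : EReal)) ∨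
           (¬(Q {t | 1 + α * (t - μ₀) ≤ 0} = 0 ∧
              Integrable (fun t => Real.log (1 + α * (t - μ₀))) Q) ∧ y = ⊥))} :=
        ⟨Qs, hQs_prob, hQs_supp, hQs_mean, Or.inr ⟨fun h => hne h.1, rfl⟩⟩
      have hL : worstEPower a b μ₀ μ₁ α = ⊥ :=
        le_antisymm (sInf_le hbot) bot_le
      rw [hL]
      have : logE B = ⊥ := by rw [logE, if_pos hB.ge]
      rw [this, EReal.coe_mul_bot_of_pos hp0, EReal.add_bot]
    · -- main case: 0 < A and 0 < B
      have hpos : ∀ t ∈ Icc a b, 0 < 1 + α * (t - μ₀) := by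
        intro t ht
        rw [hcomb t ht.1 ht.2]
        have hc : 0 ≤ (b-t)/(b-a) := div_nonneg (by linarith [ht.2]) hba.le
        have hd : 0 ≤ (t-a)/(b-a) := div_nonneg (by linarith [ht.1]) hba.le
        have hcd : (b-t)/(b-a) + (t-a)/(b-a) = 1 := by field_simp; ring
        exact lt_of_lt_of_le (lt_min hA hB) (min_le_convex_comb _ _ _ _ hc hd hcd)
      have hlog_ge : ∀ t ∈ Icc a b,
          ((b-t)/(b-a)) * Real.log A + ((t-a)/(b-a)) * Real.log B ≤
            Real.log (1 + α * (t - μ₀)) := by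
        intro t ht
        have hc : 0 ≤ (b-t)/(b-a) := div_nonneg (by linarith [ht.2]) hba.le
        have hd : 0 ≤ (t-a)/(b-a) := div_nonneg (by linarith [ht.1]) hba.le
        have hcd : (b-t)/(b-a) + (t-a)/(b-a) = 1 := by field_simp; ring
        rw [hcomb t ht.1 ht.2]
        have := strictConcaveOn_log_Ioi.concaveOn.2 (mem_Ioi.2 hA) (mem_Ioi.2 hB) hc hd hcd
        simpa [smul_eq_mul] using this
      have hbound : ∀ t ∈ Icc a b,
          |Real.log (1 + α * (t - μ₀))| ≤ |Real.log A| + |Real.log B| := by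
        intro t ht
        have hc : 0 ≤ (b-t)/(b-a) := div_nonneg (by linarith [ht.2]) hba.le
        have hd : 0 ≤ (t-a)/(b-a) := div_nonneg (by linarith [ht.1]) hba.le
        have hcd : (b-t)/(b-a) + (t-a)/(b-a) = 1 := by field_simp; ring
        have hup : Real.log (1 + α * (t - μ₀)) ≤ max (Real.log A) (Real.log B) := by
          have h1 : 1 + α * (t - μ₀) ≤ max A B := by
            rw [hcomb t ht.1 ht.2]
            exact convex_comb_le_max _ _ _ _ hc hd hcd
          calc Real.log (1 + α * (t - μ₀)) ≤ Real.log (max A B) :=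
                Real.log_le_log (hpos t ht) h1
            _ ≤ max (Real.log A) (Real.log B) := by
                rcases max_choice A B with h | h <;> rw [h] <;> simp [le_max_left, le_max_right]
        have hlo : min (Real.log A) (Real.log B) ≤ Real.log (1 + α * (t - μ₀)) := by
          exact le_trans (min_le_convex_comb _ _ _ _ hc hd hcd) (hlog_ge t ht)
        rw [abs_le]
        constructor
        · rcases min_choice (Real.log A) (Real.log B) with h | h <;> rw [h] at hlo <;>
            [linarith [neg_abs_le (Real.log A), abs_nonneg (Real.log B)];
             linarith [neg_abs_le (Real.log B), abs_nonneg (Real.log A)]]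
        · rcases max_choice (Real.log A) (Real.log B) with h | h <;> rw [h] at hup <;>
            [linarith [le_abs_self (Real.log A), abs_nonneg (Real.log B)];
             linarith [le_abs_self (Real.log B), abs_nonneg (Real.log A)]]
      -- RHS in real form
      have hRHS : ((q : ℝ) : EReal) * logE A + ((p : ℝ) : EReal) * logE B =
          ((q * Real.log A + p * Real.log B : ℝ) : EReal) := by
        rw [logE, if_neg (not_le.2 hA), logE, if_neg (not_le.2 hB),
          ← EReal.coe_mul, ← EReal.coe_mul, ← EReal.coe_add]
      rw [hRHS]
      -- the two-point measure is not on the bad set, and achieves the value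
      have hnotA : a ∉ {t : ℝ | 1 + α * (t - μ₀) ≤ 0} := by
        simp only [mem_setOf_eq, not_le]; exact hA
      have hnotB : b ∉ {t : ℝ | 1 + α * (t - μ₀) ≤ 0} := by
        simp only [mem_setOf_eq, not_le]; exact hB
      have hQs_zero : Qs {t | 1 + α * (t - μ₀) ≤ 0} = 0 := by
        rw [hQs_def]
        simp only [Measure.coe_add, Pi.add_apply, Measure.smul_apply, smul_eq_mul,
          Measure.dirac_apply]
        rw [Set.indicator_of_notMem hnotA, Set.indicator_of_notMem hnotB]
        simp
      have hQs_int : Integrable (fun t => Real.log (1 + α * (t - μ₀))) Qs := by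
        rw [hQs_def]
        exact ((integrable_dirac' _ a).smul_measure ENNReal.ofReal_ne_top).add_measure
          ((integrable_dirac' _ b).smul_measure ENNReal.ofReal_ne_top)
      have hQs_val : (∫ t, Real.log (1 + α * (t - μ₀)) ∂Qs : ℝ) =
          q * Real.log A + p * Real.log B := by
        rw [hQs_def, integral_two_point a b q hq0.le hq1 (fun t => Real.log (1 + α * (t - μ₀)))]
        rw [hp_eq, hA_def, hB_def]
      refine le_antisymm ?_ ?_
      · refine sInf_le ⟨Qs, hQs_prob, hQs_supp, hQs_mean, Or.inl ⟨⟨hQs_zero, hQs_int⟩, ?_⟩⟩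
        rw [hQs_val]
      · refine le_sInf ?_
        rintro y ⟨Q, hQprob, hQc, hQmean, hy⟩
        have haeIcc : ∀ᵐ t ∂Q, t ∈ Icc a b := by
          rw [ae_iff]
          simpa only [Set.compl_def] using hQc
        have hid : Integrable (fun t => t) Q := by
          refine Integrable.mono' (integrable_const (|a| + |b|)) aestronglyMeasurable_id ?_
          filter_upwards [haeIcc] with t ht
          rw [Real.norm_eq_abs, abs_le]
          constructor <;>
            [linarith [ht.1, neg_abs_le a, abs_nonneg b];
             linarith [ht.2, le_abs_self b, abs_nonneg a]]
        have hlogint : Integrable (fun t => Real.log (1 + α * (t - μ₀))) Q := by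
          refine Integrable.mono' (integrable_const (|Real.log A| + |Real.log B|)) ?_ ?_
          · exact (Real.measurable_log.comp
              (measurable_const.add (measurable_const.mul
                (measurable_id.sub measurable_const)))).aestronglyMeasurable
          · filter_upwards [haeIcc] with t ht
            rw [Real.norm_eq_abs]
            exact hbound t ht
        rcases hy with ⟨⟨_, _⟩, hy⟩ | ⟨hcontra, _⟩
        · rw [hy, EReal.coe_le_coe_iff]
          set g : ℝ → ℝ := fun t =>
            (b * Real.log A - a * Real.log B) / (b-a) + (Real.log B - Real.log A)/(b-a) * t
            with hg_def
          have hgint : Integrable g Q :=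
            (integrable_const _).add (hid.const_mul _)
          have hle : g ≤ᵐ[Q] fun t => Real.log (1 + α * (t - μ₀)) := by
            filter_upwards [haeIcc] with t ht
            refine le_trans (le_of_eq ?_) (hlog_ge t ht)
            rw [hg_def]; field_simp; ring
          have hmono := integral_mono_ae hgint hlogint hle
          have hgval : (∫ t, g t ∂Q) = q * Real.log A + p * Real.log B := by
            rw [hg_def]
            rw [integral_add (integrable_const _) (hid.const_mul _), integral_const,
              probReal_univ, integral_const_mul, hQmean]
            rw [hq_def, hp_def]
            simp only [ENNReal.toReal_one, smul_eq_mul, one_mul]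
            field_simp
            ring
          rw [← hgval]
          exact hmono
        · exact absurd ⟨measure_mono_null (fun t htt => by
            simp only [mem_compl_iff, mem_Icc, not_and_or, not_le]
            by_contra hcon
            push_neg at hcon
            have := hpos t ⟨hcon.1, hcon.2⟩
            exact absurd htt (by simp only [mem_setOf_eq]; linarith)) hQc, hlogint⟩ hcontra
  exact ⟨key, iSup_congr fun α => iSup_congr fun hα => key α hα⟩
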